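/- There is no self-adjoint dephased complex Hadamard matrix H ∈ M₆(ℂ) whose diagonal is (1, −1, −1, 1, 1, 1). -/

import Mathlib

open Complex Matrix ComplexConjugate

/-- A complex Hadamard matrix of order `n`: all entries of absolute value 1
and pairwise orthogonal rows, i.e. `H Hᴴ = n·1`. -/
def IsHadamard {n : ℕ} (H : Matrix (Fin n) (Fin n) ℂ) : Prop :=
  (∀ i j, ‖H i j‖ = 1) ∧ H * Hᴴ = (n : ℂ) • 1

/-- A matrix is dephased if its first row and first column consist of 1's. -/
def IsDephased {n : ℕ} [NeZero n] (H : Matrix (Fin n) (Fin n) ℂ) : Prop :=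
  ∀ k, H 0 k = 1 ∧ H k 0 = 1

theorem no_selfAdjoint_dephased_diag_aux (H : Matrix (Fin 6) (Fin 6) ℂ)
    (habs : ∀ i j, ‖H i j‖ = 1)
    (horth : H * Hᴴ = ((6:ℕ) : ℂ) • 1)
    (hherm : Hᴴ = H)
    (h00 : H 0 0 = 1) (h11 : H 1 1 = (-1)) (h22 : H 2 2 = (-1))
    (h33 : H 3 3 = 1) (h44 : H 4 4 = 1) (h55 : H 5 5 = 1) : False := by
  have hH : H.IsHermitian := hherm
  have hsq : H * H = (6:ℂ) • 1 := by
    nth_rewrite 2 [← hherm]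
    rw [horth]; norm_num
  -- each eigenvalue squares to 6
  have hlam : ∀ i, hH.eigenvalues i ^ 2 = 6 := by
    intro i
    set v := ⇑(hH.eigenvectorBasis i) with hvdef
    have hv := hH.mulVec_eigenvectorBasis i
    have hv2 : (H * H) *ᵥ v = ((hH.eigenvalues i ^ 2 : ℝ) : ℂ) • v := by
      rw [← mulVec_mulVec, hv, mulVec_smul, hv, smul_smul, ← sq,
        RCLike.real_smul_eq_coe_smul (K := ℂ)]
      norm_num
      rfl
    rw [hsq, smul_mulVec, one_mulVec] at hv2
    have hvne : v ≠ 0 := by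
      have h1 := hH.eigenvectorBasis.orthonormal.1 i
      intro h0
      have : (hH.eigenvectorBasis i : EuclideanSpace ℂ (Fin 6)) = 0 := by
        ext j; exact congrFun h0 j
      rw [this] at h1; simp at h1
    have : ((6:ℂ) - ((hH.eigenvalues i ^ 2 : ℝ) : ℂ)) • v = 0 := by
      rw [sub_smul, hv2, sub_self]
    rcases smul_eq_zero.mp this with h | h
    · have : ((hH.eigenvalues i ^ 2 : ℝ) : ℂ) = 6 := by
        linear_combination -h
      exact_mod_cast this
    · exact absurd h hvne
  -- trace equals sum of eigenvalues
  have htr : H.trace = ∑ i, (hH.eigenvalues i : ℂ) := by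
    conv_lhs => rw [hH.spectral_theorem]
    rw [Unitary.conjStarAlgAut_apply, Matrix.trace_mul_comm, ← Matrix.mul_assoc]
    rw [show (star (hH.eigenvectorUnitary : Matrix (Fin 6) (Fin 6) ℂ)) *
        (hH.eigenvectorUnitary : Matrix (Fin 6) (Fin 6) ℂ) = 1 from
      Unitary.coe_star_mul_self _]
    rw [Matrix.one_mul, Matrix.trace_diagonal]
    rfl
  -- trace is 2
  have htr2 : H.trace = 2 := by
    simp [Matrix.trace, Matrix.diag, Fin.sum_univ_six, h00, h11, h22, h33, h44, h55]
    ring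
  -- sum of eigenvalues is 2 in ℝ
  have hsum : ∑ i, hH.eigenvalues i = 2 := by
    have : ((∑ i, hH.eigenvalues i : ℝ) : ℂ) = ((2:ℝ) : ℂ) := by
      push_cast
      rw [← htr, htr2]
    exact_mod_cast this
  -- each eigenvalue is ± √6
  have hpm : ∀ i, ∃ k : ℤ, hH.eigenvalues i = (k:ℝ) * Real.sqrt 6 ∧ k^2 = 1 := by
    intro i
    have h6 : Real.sqrt 6 ^ 2 = 6 := Real.sq_sqrt (by norm_num)
    have : (hH.eigenvalues i - Real.sqrt 6) * (hH.eigenvalues i + Real.sqrt 6) = 0 := by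
      linear_combination hlam i - h6
    rcases mul_eq_zero.mp this with h | h
    · exact ⟨1, by push_cast; linarith, by norm_num⟩
    · exact ⟨-1, by push_cast; linarith, by norm_num⟩
  choose k hk hk2 using hpm
  have hKsum : ((∑ i, k i : ℤ) : ℝ) * Real.sqrt 6 = 2 := by
    push_cast
    rw [Finset.sum_mul]
    rw [← hsum]
    exact Finset.sum_congr rfl fun i _ => (hk i).symm
  have h6 : Real.sqrt 6 ^ 2 = 6 := Real.sq_sqrt (by norm_num)
  have h4 : ((∑ i, k i : ℤ) : ℝ) ^ 2 * 6 = 4 := by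
    have := congrArg (· ^ 2) hKsum
    simp only [mul_pow, h6] at this
    push_cast at this ⊢
    linarith [this]
  have hint : ((∑ i, k i : ℤ)) ^ 2 * 6 = 4 := by exact_mod_cast h4
  obtain m := (∑ i, k i) ^ 2
  -- conclude
  have : ∃ m : ℤ, m * 6 = 4 := ⟨_, hint⟩
  obtain ⟨m, hm⟩ := this
  omega

/-- There is no self-adjoint dephased complex Hadamard matrix in
M₆(ℂ) whose diagonal is (1, (-1), (-1), 1, 1, 1). -/
theorem no_selfAdjoint_dephased_diag_stmt9 :
    ¬ ∃ H : Matrix (Fin 6) (Fin 6) ℂ,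
      _root_.IsHadamard H ∧ Hᴴ = H ∧ IsDephased H ∧
      H 0 0 = 1 ∧ H 1 1 = (-1) ∧ H 2 2 = (-1) ∧
      H 3 3 = 1 ∧ H 4 4 = 1 ∧ H 5 5 = 1 := by
  rintro ⟨H, ⟨habs, horth⟩, hherm, _, h00, h11, h22, h33, h44, h55⟩
  exact no_selfAdjoint_dephased_diag_aux H habs horth hherm h00 h11 h22 h33 h44 h55
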